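/- Let n m : ℕ with 2 ≤ n, 2 ≤ m, m ≠ n, m ≠ n+1 and 3*m ≤ m^2 + n, and let G be a simple graph on a finite vertex type with G.IsSRGWith (n^2) (m*(n-1)) (m^2+n-3*m) (m*(m-1)) (i.e. G has OA(n,m) parameters). Then E(G) = E(Gᶜ). If moreover 2*m ≠ n+1, then G and Gᶜ are not isospectral. -/

import Mathlib

open Finset

/-- The adjacency matrix of a simple graph over `ℝ` is Hermitian. -/
lemma adjMatrix_isHermitian {V : Type*} [Fintype V] (G : SimpleGraph V) [DecidableRel G.Adj] :
    (G.adjMatrix ℝ).IsHermitian := by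
  rw [Matrix.IsHermitian, Matrix.conjTranspose_eq_transpose_of_trivial]
  exact G.isSymm_adjMatrix

/-- The eigenvalues (with multiplicity) of the real adjacency matrix of a simple graph. -/
noncomputable def adjEig {V : Type*} [Fintype V] [DecidableEq V] (G : SimpleGraph V) : V → ℝ := by
  classical
  exact (adjMatrix_isHermitian G).eigenvalues

/-- The energy of a graph : the sum of the absolute values of its adjacency eigenvalues. -/
noncomputable def energy {V : Type*} [Fintype V] [DecidableEq V] (G : SimpleGraph V) : ℝ :=
  ∑ i, |adjEig G i|

/-- The characteristic polynomial of the real adjacency matrix of a simple graph. -/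
noncomputable def charpolyOf {V : Type*} [Fintype V] [DecidableEq V] (G : SimpleGraph V) :
    Polynomial ℝ := by
  classical
  exact (G.adjMatrix ℝ).charpoly


section helpers

open Polynomial Matrix

lemma adjEig_eq {V : Type*} [Fintype V] [DecidableEq V] (G : SimpleGraph V)
    [inst : DecidableRel G.Adj] :
    adjEig G = (adjMatrix_isHermitian G).eigenvalues := by
  unfold adjEig
  congr!

lemma charpolyOf_eq {V : Type*} [Fintype V] [DecidableEq V] (G : SimpleGraph V)
    [inst : DecidableRel G.Adj] :
    charpolyOf G = (G.adjMatrix ℝ).charpoly := by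
  unfold charpolyOf
  congr!


section spectral
variable {V : Type*} [Fintype V] [DecidableEq V] {A : Matrix V V ℝ}

lemma my_charmatrix_conj (U W M : Matrix V V ℝ) (hUW : U * W = 1) :
    charmatrix (U * M * W) = (Polynomial.C (R := ℝ)).mapMatrix U * charmatrix M
      * (Polynomial.C (R := ℝ)).mapMatrix W := by
  have hscal : (Matrix.scalar V (X : ℝ[X])) =
      (Polynomial.C (R := ℝ)).mapMatrix U * Matrix.scalar V (X : ℝ[X])
        * (Polynomial.C (R := ℝ)).mapMatrix W := by
    have hs : Matrix.scalar V (X : ℝ[X]) = (X : ℝ[X]) • (1 : Matrix V V ℝ[X]) := by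
      rw [Matrix.smul_one_eq_diagonal]; rfl
    rw [hs, mul_smul_comm, smul_mul_assoc, mul_one, ← _root_.map_mul, hUW]
    simp
  conv_rhs => rw [charmatrix, mul_sub, sub_mul, ← hscal]
  rw [charmatrix, _root_.map_mul, _root_.map_mul]

lemma my_charpoly_conj (U W M : Matrix V V ℝ) (hUW : U * W = 1) (hWU : W * U = 1) :
    (U * M * W).charpoly = M.charpoly := by
  have h1 : (Polynomial.C (R := ℝ)).mapMatrix W * (Polynomial.C (R := ℝ)).mapMatrix U = 1 := by
    rw [← RingHom.map_mul, hWU, RingHom.map_one]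
  unfold Matrix.charpoly
  rw [my_charmatrix_conj U W M hUW, det_mul, det_mul, mul_comm, ← mul_assoc, ← det_mul, h1,
    det_one, one_mul]

lemma my_charpoly_diagonal (d : V → ℝ) :
    (Matrix.diagonal d).charpoly = ∏ i, (X - Polynomial.C (d i)) := by
  have : charmatrix (Matrix.diagonal d) = Matrix.diagonal (fun i => X - Polynomial.C (d i)) := by
    ext i j
    rcases eq_or_ne i j with rfl | hij
    · simp [charmatrix_apply_eq]
    · simp [charmatrix_apply_ne _ _ _ hij, Matrix.diagonal_apply_ne _ hij]
  rw [Matrix.charpoly, this, det_diagonal]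

lemma my_charpoly_eq (hA : A.IsHermitian) :
    A.charpoly = ∏ i, (X - Polynomial.C (hA.eigenvalues i)) := by
  conv_lhs => rw [hA.spectral_theorem, Unitary.conjStarAlgAut_apply]
  rw [my_charpoly_conj _ _ _ ((Matrix.mem_unitaryGroup_iff).mp (hA.eigenvectorUnitary).2)
    ((Matrix.mem_unitaryGroup_iff').mp (hA.eigenvectorUnitary).2)]
  have h2 : Matrix.diagonal (RCLike.ofReal ∘ hA.eigenvalues) = Matrix.diagonal hA.eigenvalues := by
    congr 1
  rw [h2, my_charpoly_diagonal]

lemma my_sum_eig (hA : A.IsHermitian) : ∑ i, hA.eigenvalues i = A.trace := by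
  conv_rhs => rw [hA.spectral_theorem, Unitary.conjStarAlgAut_apply]
  rw [Matrix.trace_mul_cycle,
    (Matrix.mem_unitaryGroup_iff').mp (hA.eigenvectorUnitary).2, one_mul, trace_diagonal]
  simp

lemma my_sum_eig_sq (hA : A.IsHermitian) : ∑ i, hA.eigenvalues i ^ 2 = (A * A).trace := by
  conv_rhs => rw [hA.spectral_theorem, Unitary.conjStarAlgAut_apply]
  rw [show ∀ (U D W : Matrix V V ℝ), U * D * W * (U * D * W) = U * (D * (W * U) * D) * W by
    intros; noncomm_ring]
  rw [(Matrix.mem_unitaryGroup_iff').mp (hA.eigenvectorUnitary).2, mul_one,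
    Matrix.trace_mul_cycle,
    (Matrix.mem_unitaryGroup_iff').mp (hA.eigenvectorUnitary).2, one_mul,
    diagonal_mul_diagonal, trace_diagonal]
  simp [sq]
end spectral


section cubic
variable {V : Type*} [Fintype V] [DecidableEq V] {A : Matrix V V ℝ}

lemma my_eig_cubic (hA : A.IsHermitian) (a b c : ℝ)
    (h0 : (A - a • 1) * ((A - b • 1) * (A - c • 1)) = 0) (i : V) :
    (hA.eigenvalues i - a) * ((hA.eigenvalues i - b) * (hA.eigenvalues i - c)) = 0 := by
  set t := hA.eigenvalues i with ht
  set v : V → ℝ := ⇑(hA.eigenvectorBasis i) with hv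
  have hAv : A *ᵥ v = t • v := hA.mulVec_eigenvectorBasis i
  have hstep : ∀ (e : ℝ) (x : V → ℝ), A *ᵥ x = t • x → (A - e • 1) *ᵥ x = (t - e) • x := by
    intro e x hx
    rw [Matrix.sub_mulVec, Matrix.smul_mulVec, Matrix.one_mulVec, hx, sub_smul]
  have key : ((A - a • 1) * ((A - b • 1) * (A - c • 1))) *ᵥ v
      = ((t - a) * ((t - b) * (t - c))) • v := by
    rw [← Matrix.mulVec_mulVec, ← Matrix.mulVec_mulVec, hstep c v hAv, Matrix.mulVec_smul,
      hstep b v hAv, Matrix.mulVec_smul, Matrix.mulVec_smul, hstep a v hAv]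
    rw [smul_smul, smul_smul]
    congr 1
    ring
  rw [h0, Matrix.zero_mulVec] at key
  have hvne : v ≠ 0 := by
    intro hzero
    have := hA.eigenvectorBasis.orthonormal.ne_zero i
    apply this
    ext j
    exact congrFun hzero j
  rcases smul_eq_zero.mp key.symm with h | h
  · exact h
  · exact absurd h hvne

lemma my_srg_cubic {G : SimpleGraph V} [DecidableRel G.Adj] {n k ℓ μ : ℕ}
    (h : G.IsSRGWith n k ℓ μ) (r s : ℝ)
    (h1 : r + s = (ℓ : ℝ) - μ) (h2 : r * s = (μ : ℝ) - k) :
    (G.adjMatrix ℝ - (k : ℝ) • 1) * ((G.adjMatrix ℝ - r • 1) * (G.adjMatrix ℝ - s • 1)) = 0 := by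
  set A := G.adjMatrix ℝ with hA
  set J : Matrix V V ℝ := Matrix.of (fun _ _ => (1 : ℝ)) with hJ
  have hsum : Gᶜ.adjMatrix ℝ + 1 + A = J := by
    ext i j
    rcases eq_or_ne i j with rfl | hij
    · simp [hJ, hA]
    · by_cases hadj : G.Adj i j <;>
        simp [hJ, hA, Matrix.one_apply_ne hij, hadj, hij, SimpleGraph.compl_adj]
  have hAJ : A * J = (k : ℝ) • J := by
    ext i j
    rw [hA, hJ]
    simp only [SimpleGraph.adjMatrix_mul_apply, Matrix.smul_apply, Matrix.of_apply, smul_eq_mul,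
      mul_one, Finset.sum_const, nsmul_eq_mul]
    rw [← SimpleGraph.degree, h.regular i]
  have hAA : A * A = (k : ℝ) • 1 + (ℓ : ℝ) • A + (μ : ℝ) • Gᶜ.adjMatrix ℝ := by
    have hm := h.matrix_eq (α := ℝ)
    rw [sq] at hm
    rw [← hA] at hm
    rw [hm]
    simp [Nat.cast_smul_eq_nsmul]
  have hquad : (A - r • 1) * (A - s • 1) = (μ : ℝ) • J := by
    rw [← hsum, mul_sub, sub_mul, sub_mul, hAA]
    simp only [Matrix.smul_mul, Matrix.mul_smul, one_mul, mul_one, smul_smul]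
    match_scalars
    · linear_combination h2
    · linear_combination -h1
    · ring
  rw [hquad, Matrix.mul_smul, sub_mul, hAJ, Matrix.smul_mul, one_mul, sub_self, smul_zero]
end cubic


lemma my_sum_three {V : Type*} [Fintype V] [DecidableEq V] (f : V → ℝ) (a b c : ℝ)
    (hab : a ≠ b) (hac : a ≠ c) (hbc : b ≠ c)
    (hf : ∀ i, f i = a ∨ f i = b ∨ f i = c) (g : ℝ → ℝ) :
    ∑ i, g (f i) = ((univ.filter (fun i => f i = a)).card : ℝ) * g a
      + ((univ.filter (fun i => f i = b)).card : ℝ) * g b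
      + ((univ.filter (fun i => f i = c)).card : ℝ) * g c := by
  classical
  have hsub : ∀ (x : ℝ), ∑ i ∈ univ.filter (fun i => f i = x), g (f i)
      = ((univ.filter (fun i => f i = x)).card : ℝ) * g x := by
    intro x
    rw [Finset.sum_congr rfl (fun i hi => by rw [(Finset.mem_filter.mp hi).2]),
      Finset.sum_const, nsmul_eq_mul]
  have hdisj : Disjoint (univ.filter (fun i => f i = b)) (univ.filter (fun i => f i = c)) := by
    rw [Finset.disjoint_left]
    intro i hib hic
    exact hbc ((Finset.mem_filter.mp hib).2 ▸ (Finset.mem_filter.mp hic).2 ▸ rfl)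
  have hsplit : (univ.filter (fun i => ¬ f i = a))
      = univ.filter (fun i => f i = b) ∪ univ.filter (fun i => f i = c) := by
    ext i
    simp only [Finset.mem_filter, Finset.mem_union, Finset.mem_univ, true_and]
    constructor
    · intro hi; rcases hf i with h' | h' | h' <;> tauto
    · rintro (h' | h') <;> rw [h'] <;> [exact fun hh => hab hh.symm; exact fun hh => hac hh.symm]
  rw [← Finset.sum_filter_add_sum_filter_not univ (fun i => f i = a), hsplit,
    Finset.sum_union hdisj, hsub, hsub, hsub, add_assoc]

lemma my_master {V : Type*} [Fintype V] [DecidableEq V] (G : SimpleGraph V)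
    [inst : DecidableRel G.Adj] {v k ℓ μ : ℕ} (h : G.IsSRGWith v k ℓ μ) (r s : ℝ)
    (h1 : r + s = (ℓ : ℝ) - μ) (h2 : r * s = (μ : ℝ) - k)
    (hkr : (k : ℝ) ≠ r) (hks : (k : ℝ) ≠ s) (hrs : r ≠ s) :
    (∀ i, adjEig G i = (k : ℝ) ∨ adjEig G i = r ∨ adjEig G i = s) ∧
    ∃ Ck Cr Cs : ℕ,
      (∀ g : ℝ → ℝ, ∑ i, g (adjEig G i)
          = (Ck : ℝ) * g (k : ℝ) + (Cr : ℝ) * g r + (Cs : ℝ) * g s) ∧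
      ((Ck : ℝ) + Cr + Cs = (v : ℝ)) ∧
      ((k : ℝ) * Ck + r * Cr + s * Cs = 0) ∧
      ((k : ℝ) ^ 2 * Ck + r ^ 2 * Cr + s ^ 2 * Cs = (v : ℝ) * k) ∧
      (0 < Ck → ∃ i, adjEig G i = (k : ℝ)) := by
  have hA := adjMatrix_isHermitian G
  have heig : adjEig G = hA.eigenvalues := adjEig_eq G
  have hcube := my_srg_cubic h r s h1 h2
  have hmem : ∀ i, adjEig G i = (k : ℝ) ∨ adjEig G i = r ∨ adjEig G i = s := by
    intro i
    have hz := my_eig_cubic hA (k : ℝ) r s hcube i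
    rw [← heig] at hz
    rcases mul_eq_zero.mp hz with h' | h'
    · exact Or.inl (sub_eq_zero.mp h')
    · rcases mul_eq_zero.mp h' with h'' | h''
      · exact Or.inr (Or.inl (sub_eq_zero.mp h''))
      · exact Or.inr (Or.inr (sub_eq_zero.mp h''))
  refine ⟨hmem, (univ.filter (fun i => adjEig G i = (k : ℝ))).card,
    (univ.filter (fun i => adjEig G i = r)).card,
    (univ.filter (fun i => adjEig G i = s)).card, ?_, ?_, ?_, ?_, ?_⟩
  · exact fun g => my_sum_three (adjEig G) (k : ℝ) r s hkr hks hrs hmem g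
  · have e := my_sum_three (adjEig G) (k : ℝ) r s hkr hks hrs hmem (fun _ => (1 : ℝ))
    have huniv : ∑ _i : V, (1 : ℝ) = (v : ℝ) := by
      rw [Finset.sum_const, nsmul_eq_mul, mul_one, Finset.card_univ, h.card]
    linear_combination huniv - e
  · have e := my_sum_three (adjEig G) (k : ℝ) r s hkr hks hrs hmem (fun x => x)
    have tzero : ∑ i, adjEig G i = 0 := by
      rw [heig, my_sum_eig hA, SimpleGraph.trace_adjMatrix]
    linear_combination tzero - e
  · have e := my_sum_three (adjEig G) (k : ℝ) r s hkr hks hrs hmem (fun x => x ^ 2)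
    have hAA : G.adjMatrix ℝ * G.adjMatrix ℝ
        = (k : ℝ) • 1 + (ℓ : ℝ) • G.adjMatrix ℝ + (μ : ℝ) • Gᶜ.adjMatrix ℝ := by
      have hm := h.matrix_eq (α := ℝ)
      rw [sq] at hm
      rw [hm]
      simp [Nat.cast_smul_eq_nsmul]
    have tsq : ∑ i, adjEig G i ^ 2 = (v : ℝ) * k := by
      rw [heig, my_sum_eig_sq hA, hAA]
      simp only [Matrix.trace_add, Matrix.trace_smul, SimpleGraph.trace_adjMatrix,
        Matrix.trace_one, smul_eq_mul, mul_zero, add_zero, h.card]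
      ring
    linear_combination tsq - e
  · intro hpos
    obtain ⟨i, hi⟩ := Finset.card_pos.mp hpos
    exact ⟨i, (Finset.mem_filter.mp hi).2⟩

end helpers

set_option maxHeartbeats 2000000 in
lemma OA_aux_energy {V : Type*} [Fintype V] [DecidableEq V]
    (G : SimpleGraph V) [DecidableRel G.Adj] (n m : ℕ)
    (hn : 2 ≤ n) (hm : 2 ≤ m) (hmn : m ≠ n) (hmn1 : m ≠ n + 1) (hle : 3 * m ≤ m ^ 2 + n)
    (h : G.IsSRGWith (n ^ 2) (m * (n - 1)) (m ^ 2 + n - 3 * m) (m * (m - 1))) :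
    energy G = energy Gᶜ := by
  classical
  have hN2 : (2 : ℝ) ≤ (n : ℝ) := by exact_mod_cast hn
  have hM2 : (2 : ℝ) ≤ (m : ℝ) := by exact_mod_cast hm
  have hn1 : 1 ≤ n := by omega
  have hm1 : 1 ≤ m := by omega
  have hV : Nonempty V := by
    rw [← Fintype.card_pos_iff, h.card]
    positivity
  obtain ⟨v0⟩ := hV
  have hdeg : m * (n - 1) < n ^ 2 := by
    rw [← h.card, ← h.regular v0]
    exact G.degree_lt_card_verts v0
  have hmlt : m < n := by
    by_contra h'
    push_neg at h'
    have h2 : n + 2 ≤ m := by omega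
    have h3 : (n + 2) * (n - 1) ≤ m * (n - 1) := Nat.mul_le_mul_right _ h2
    have h4 : n ^ 2 ≤ (n + 2) * (n - 1) := by
      obtain ⟨p, rfl⟩ : ∃ p, n = p + 2 := ⟨n - 2, by omega⟩
      have e : p + 2 - 1 = p + 1 := by omega
      rw [e]
      nlinarith only []
    omega
  have hMN : (m : ℝ) < (n : ℝ) := by exact_mod_cast hmlt
  have hMN1 : (m : ℝ) + 1 ≤ (n : ℝ) := by exact_mod_cast hmlt
  -- cast equalities for the parameters of G
  have c1 : ((n - 1 : ℕ) : ℝ) = (n : ℝ) - 1 := by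
    rw [Nat.cast_sub hn1, Nat.cast_one]
  have c1m : ((m - 1 : ℕ) : ℝ) = (m : ℝ) - 1 := by
    rw [Nat.cast_sub hm1, Nat.cast_one]
  have cK : ((m * (n - 1) : ℕ) : ℝ) = (m : ℝ) * ((n : ℝ) - 1) := by
    rw [Nat.cast_mul, c1]
  have cL : ((m ^ 2 + n - 3 * m : ℕ) : ℝ) = (m : ℝ) ^ 2 + (n : ℝ) - 3 * (m : ℝ) := by
    rw [Nat.cast_sub hle]
    push_cast
    ring
  have cMu : ((m * (m - 1) : ℕ) : ℝ) = (m : ℝ) * ((m : ℝ) - 1) := by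
    rw [Nat.cast_mul, c1m]
  have cV : ((n ^ 2 : ℕ) : ℝ) = (n : ℝ) ^ 2 := by push_cast; ring
  -- apply the master lemma to G
  obtain ⟨hmemG, Ck, Cr, Cs, hgG, e1, e2, e3, hex⟩ :=
    my_master G h ((n : ℝ) - m) (-(m : ℝ))
      (by rw [cL, cMu]; ring)
      (by rw [cMu, cK]; ring)
      (by rw [cK]; intro heq
          have h0 : (n : ℝ) * ((m : ℝ) - 1) = 0 := by linear_combination heq
          nlinarith only [h0, hN2, hM2])
      (by rw [cK]; intro heq
          have h0 : (n : ℝ) * (m : ℝ) = 0 := by linear_combination heq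
          nlinarith only [h0, hN2, hM2])
      (by intro heq; linarith only [heq, hN2])
  have f1 := e1; rw [cV] at f1
  have f2 := e2; rw [cK] at f2
  have f3 := e3; rw [cK, cV] at f3
  have hCs : (Cs : ℝ) = ((n : ℝ) - 1) * ((n : ℝ) + 1 - m) := by
    have key : ((m : ℝ) * n ^ 2) * Cs = ((m : ℝ) * n ^ 2) * (((n : ℝ) - 1) * ((n : ℝ) + 1 - m)) := by
      linear_combination f3 - ((m : ℝ) * (n - 1) + ((n : ℝ) - m)) * f2
        + ((m : ℝ) * (n - 1)) * ((n : ℝ) - m) * f1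
    exact mul_left_cancel₀ (by positivity) key
  have hc := h.compl
  have b1 : m * (n - 1) ≤ n ^ 2 := le_of_lt hdeg
  have b2 : 1 ≤ n ^ 2 - m * (n - 1) := Nat.le_sub_of_add_le (by linarith only [hdeg])
  have b3 : m * (m - 1) ≤ 2 * (m * (n - 1)) := by
    have hb : m - 1 ≤ 2 * (n - 1) := by omega
    calc m * (m - 1) ≤ m * (2 * (n - 1)) := Nat.mul_le_mul_left m hb
      _ = 2 * (m * (n - 1)) := by ring
  have b4 : 2 * (m * (n - 1)) - m * (m - 1) + 2 ≤ n ^ 2 := by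
    zify [b3, hn1, hm1]
    nlinarith only [sq_nonneg ((n : ℤ) - m), (show (2 : ℤ) ≤ m by exact_mod_cast hm)]
  have b5 : m ^ 2 + n - 3 * m ≤ 2 * (m * (n - 1)) := by
    zify [hle, hn1]
    have hm' : (2 : ℤ) ≤ m := by exact_mod_cast hm
    have hmn' : (m : ℤ) < n := by exact_mod_cast hmlt
    nlinarith only [mul_nonneg (by linarith only [hm'] : (0 : ℤ) ≤ (m : ℤ) - 1) (by linarith only [hmn'] : (0 : ℤ) ≤ (n : ℤ) - m), mul_nonneg (show (0 : ℤ) ≤ m by positivity) (show (0 : ℤ) ≤ n by positivity)]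
  have b6 : 2 * (m * (n - 1)) - (m ^ 2 + n - 3 * m) ≤ n ^ 2 := by
    zify [b5, hle, hn1]
    have hmn' : (m : ℤ) < n := by exact_mod_cast hmlt
    nlinarith only [sq_nonneg ((n : ℤ) - m), hmn']
  have b4a : 2 * (m * (n - 1)) - m * (m - 1) ≤ n ^ 2 := by linarith only [b4]
  have b4b : 2 ≤ n ^ 2 - (2 * (m * (n - 1)) - m * (m - 1)) := Nat.le_sub_of_add_le (by linarith only [b4])
  have cK' : ((n ^ 2 - m * (n - 1) - 1 : ℕ) : ℝ) = (n : ℝ) ^ 2 - m * ((n : ℝ) - 1) - 1 := by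
    rw [Nat.cast_sub b2, Nat.cast_sub b1, Nat.cast_one, cV, cK]
  have cL' : ((n ^ 2 - (2 * (m * (n - 1)) - m * (m - 1)) - 2 : ℕ) : ℝ)
      = (n : ℝ) ^ 2 - (2 * ((m : ℝ) * ((n : ℝ) - 1)) - (m : ℝ) * ((m : ℝ) - 1)) - 2 := by
    rw [Nat.cast_sub b4b, Nat.cast_sub b4a, Nat.cast_sub b3]
    push_cast [c1, c1m]
    ring
  have cMu' : ((n ^ 2 - (2 * (m * (n - 1)) - (m ^ 2 + n - 3 * m)) : ℕ) : ℝ)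
      = (n : ℝ) ^ 2 - (2 * ((m : ℝ) * ((n : ℝ) - 1)) - ((m : ℝ) ^ 2 + (n : ℝ) - 3 * (m : ℝ))) := by
    rw [Nat.cast_sub b6, Nat.cast_sub b5, cL]
    push_cast [c1]
    ring
  -- apply the master lemma to the complement
  obtain ⟨hmemC, Ck', Cr', Cs', hgC, e1', e2', e3', _⟩ :=
    my_master Gᶜ hc ((m : ℝ) - 1) ((m : ℝ) - n - 1)
      (by rw [cL', cMu']; ring)
      (by rw [cMu', cK']; ring)
      (by rw [cK']; intro heq
          have h0 : (n : ℝ) * ((n : ℝ) - m) = 0 := by linear_combination heq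
          nlinarith only [h0, hN2, hMN1])
      (by rw [cK']; intro heq
          have h0 : (n : ℝ) * ((n : ℝ) - m + 1) = 0 := by linear_combination heq
          nlinarith only [h0, hN2, hMN1])
      (by intro heq; linarith only [heq, hN2])
  have f1' := e1'; rw [cV] at f1'
  have f2' := e2'; rw [cK'] at f2'
  have f3' := e3'; rw [cK', cV] at f3'
  have hCs' : (Cs' : ℝ) = (m : ℝ) * ((n : ℝ) - 1) := by
    have key : ((n : ℝ) ^ 2 * ((n : ℝ) + 1 - m)) * Cs'
        = ((n : ℝ) ^ 2 * ((n : ℝ) + 1 - m)) * ((m : ℝ) * ((n : ℝ) - 1)) := by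
      linear_combination f3'
        - (((n : ℝ) ^ 2 - m * ((n : ℝ) - 1) - 1) + ((m : ℝ) - 1)) * f2'
        + ((n : ℝ) ^ 2 - m * ((n : ℝ) - 1) - 1) * ((m : ℝ) - 1) * f1'
    refine mul_left_cancel₀ ?_ key
    have : (0 : ℝ) < (n : ℝ) ^ 2 * ((n : ℝ) + 1 - m) := by
      apply mul_pos (by positivity)
      linarith only [hMN]
    exact ne_of_gt this
  -- energies
  have hsubG : ∑ i, (|adjEig G i| - adjEig G i) = ∑ i, |adjEig G i| - ∑ i, adjEig G i :=
    Finset.sum_sub_distrib _ _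
  have hsubC : ∑ i, (|adjEig Gᶜ i| - adjEig Gᶜ i) = ∑ i, |adjEig Gᶜ i| - ∑ i, adjEig Gᶜ i :=
    Finset.sum_sub_distrib _ _
  have eAbs := hgG (fun x => |x| - x)
  have eId := hgG (fun x => x)
  have eAbs' := hgC (fun x => |x| - x)
  have eId' := hgC (fun x => x)
  have a1 : |((m * (n - 1) : ℕ) : ℝ)| = ((m * (n - 1) : ℕ) : ℝ) := abs_of_nonneg (Nat.cast_nonneg _)
  have a2 : |(n : ℝ) - m| = (n : ℝ) - m := abs_of_nonneg (by linarith only [hMN])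
  have a3 : |(-(m : ℝ))| = (m : ℝ) := by rw [abs_neg, abs_of_nonneg (by linarith only [hM2])]
  have a1' : |((n ^ 2 - m * (n - 1) - 1 : ℕ) : ℝ)| = ((n ^ 2 - m * (n - 1) - 1 : ℕ) : ℝ) :=
    abs_of_nonneg (Nat.cast_nonneg _)
  have a2' : |(m : ℝ) - 1| = (m : ℝ) - 1 := abs_of_nonneg (by linarith only [hM2])
  have a3' : |(m : ℝ) - n - 1| = (n : ℝ) + 1 - m := by
    rw [abs_of_nonpos (by linarith only [hMN1])]
    ring
  have E2 : ∑ i, adjEig G i = 0 := by linear_combination eId + e2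
  have E2' : ∑ i, adjEig Gᶜ i = 0 := by linear_combination eId' + e2'
  have hEG : energy G = 2 * (m : ℝ) * (((n : ℝ) - 1) * ((n : ℝ) + 1 - m)) := by
    unfold energy
    linear_combination eAbs - hsubG + E2 + (Ck : ℝ) * a1 + (Cr : ℝ) * a2 + (Cs : ℝ) * a3
      + 2 * (m : ℝ) * hCs
  have hEC : energy Gᶜ = 2 * ((n : ℝ) + 1 - m) * ((m : ℝ) * ((n : ℝ) - 1)) := by
    unfold energy
    linear_combination eAbs' - hsubC + E2' + (Ck' : ℝ) * a1' + (Cr' : ℝ) * a2' + (Cs' : ℝ) * a3'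
      + 2 * ((n : ℝ) + 1 - m) * hCs'
  rw [hEG, hEC]
  ring

set_option maxHeartbeats 2000000 in
lemma OA_aux_charpoly {V : Type*} [Fintype V] [DecidableEq V]
    (G : SimpleGraph V) [DecidableRel G.Adj] (n m : ℕ)
    (hn : 2 ≤ n) (hm : 2 ≤ m) (hmn : m ≠ n) (hmn1 : m ≠ n + 1) (hle : 3 * m ≤ m ^ 2 + n)
    (h : G.IsSRGWith (n ^ 2) (m * (n - 1)) (m ^ 2 + n - 3 * m) (m * (m - 1))) :
    2 * m ≠ n + 1 → charpolyOf G ≠ charpolyOf Gᶜ := by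
  classical
  have hN2 : (2 : ℝ) ≤ (n : ℝ) := by exact_mod_cast hn
  have hM2 : (2 : ℝ) ≤ (m : ℝ) := by exact_mod_cast hm
  have hn1 : 1 ≤ n := by omega
  have hm1 : 1 ≤ m := by omega
  have hV : Nonempty V := by
    rw [← Fintype.card_pos_iff, h.card]
    positivity
  obtain ⟨v0⟩ := hV
  have hdeg : m * (n - 1) < n ^ 2 := by
    rw [← h.card, ← h.regular v0]
    exact G.degree_lt_card_verts v0
  have hmlt : m < n := by
    by_contra h'
    push_neg at h'
    have h2 : n + 2 ≤ m := by omega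
    have h3 : (n + 2) * (n - 1) ≤ m * (n - 1) := Nat.mul_le_mul_right _ h2
    have h4 : n ^ 2 ≤ (n + 2) * (n - 1) := by
      obtain ⟨p, rfl⟩ : ∃ p, n = p + 2 := ⟨n - 2, by omega⟩
      have e : p + 2 - 1 = p + 1 := by omega
      rw [e]
      nlinarith only []
    omega
  have hMN : (m : ℝ) < (n : ℝ) := by exact_mod_cast hmlt
  have hMN1 : (m : ℝ) + 1 ≤ (n : ℝ) := by exact_mod_cast hmlt
  -- cast equalities for the parameters of G
  have c1 : ((n - 1 : ℕ) : ℝ) = (n : ℝ) - 1 := by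
    rw [Nat.cast_sub hn1, Nat.cast_one]
  have c1m : ((m - 1 : ℕ) : ℝ) = (m : ℝ) - 1 := by
    rw [Nat.cast_sub hm1, Nat.cast_one]
  have cK : ((m * (n - 1) : ℕ) : ℝ) = (m : ℝ) * ((n : ℝ) - 1) := by
    rw [Nat.cast_mul, c1]
  have cL : ((m ^ 2 + n - 3 * m : ℕ) : ℝ) = (m : ℝ) ^ 2 + (n : ℝ) - 3 * (m : ℝ) := by
    rw [Nat.cast_sub hle]
    push_cast
    ring
  have cMu : ((m * (m - 1) : ℕ) : ℝ) = (m : ℝ) * ((m : ℝ) - 1) := by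
    rw [Nat.cast_mul, c1m]
  have cV : ((n ^ 2 : ℕ) : ℝ) = (n : ℝ) ^ 2 := by push_cast; ring
  -- apply the master lemma to G
  obtain ⟨hmemG, Ck, Cr, Cs, hgG, e1, e2, e3, hex⟩ :=
    my_master G h ((n : ℝ) - m) (-(m : ℝ))
      (by rw [cL, cMu]; ring)
      (by rw [cMu, cK]; ring)
      (by rw [cK]; intro heq
          have h0 : (n : ℝ) * ((m : ℝ) - 1) = 0 := by linear_combination heq
          nlinarith only [h0, hN2, hM2])
      (by rw [cK]; intro heq
          have h0 : (n : ℝ) * (m : ℝ) = 0 := by linear_combination heq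
          nlinarith only [h0, hN2, hM2])
      (by intro heq; linarith only [heq, hN2])
  have f1 := e1; rw [cV] at f1
  have f2 := e2; rw [cK] at f2
  have f3 := e3; rw [cK, cV] at f3
  have hCs : (Cs : ℝ) = ((n : ℝ) - 1) * ((n : ℝ) + 1 - m) := by
    have key : ((m : ℝ) * n ^ 2) * Cs = ((m : ℝ) * n ^ 2) * (((n : ℝ) - 1) * ((n : ℝ) + 1 - m)) := by
      linear_combination f3 - ((m : ℝ) * (n - 1) + ((n : ℝ) - m)) * f2
        + ((m : ℝ) * (n - 1)) * ((n : ℝ) - m) * f1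
    exact mul_left_cancel₀ (by positivity) key
  have hCk : (Ck : ℝ) = 1 := by
    have key : ((m : ℝ) * n ^ 2 * (m - 1)) * Ck = ((m : ℝ) * n ^ 2 * (m - 1)) * 1 := by
      linear_combination f3 - (((n : ℝ) - m) + (-(m : ℝ))) * f2
        + ((n : ℝ) - m) * (-(m : ℝ)) * f1
    refine mul_left_cancel₀ ?_ key
    have : (0 : ℝ) < (m : ℝ) * n ^ 2 * (m - 1) := by
      apply mul_pos (by positivity)
      linarith only [hM2]
    exact ne_of_gt this
  -- complement parameters, casts
  have hc := h.compl
  have b1 : m * (n - 1) ≤ n ^ 2 := le_of_lt hdeg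
  have b2 : 1 ≤ n ^ 2 - m * (n - 1) := Nat.le_sub_of_add_le (by linarith only [hdeg])
  have b3 : m * (m - 1) ≤ 2 * (m * (n - 1)) := by
    have hb : m - 1 ≤ 2 * (n - 1) := by omega
    calc m * (m - 1) ≤ m * (2 * (n - 1)) := Nat.mul_le_mul_left m hb
      _ = 2 * (m * (n - 1)) := by ring
  have b4 : 2 * (m * (n - 1)) - m * (m - 1) + 2 ≤ n ^ 2 := by
    zify [b3, hn1, hm1]
    nlinarith only [sq_nonneg ((n : ℤ) - m), (show (2 : ℤ) ≤ m by exact_mod_cast hm)]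
  have b5 : m ^ 2 + n - 3 * m ≤ 2 * (m * (n - 1)) := by
    zify [hle, hn1]
    have hm' : (2 : ℤ) ≤ m := by exact_mod_cast hm
    have hmn' : (m : ℤ) < n := by exact_mod_cast hmlt
    nlinarith only [mul_nonneg (by linarith only [hm'] : (0 : ℤ) ≤ (m : ℤ) - 1) (by linarith only [hmn'] : (0 : ℤ) ≤ (n : ℤ) - m), mul_nonneg (show (0 : ℤ) ≤ m by positivity) (show (0 : ℤ) ≤ n by positivity)]
  have b6 : 2 * (m * (n - 1)) - (m ^ 2 + n - 3 * m) ≤ n ^ 2 := by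
    zify [b5, hle, hn1]
    have hmn' : (m : ℤ) < n := by exact_mod_cast hmlt
    nlinarith only [sq_nonneg ((n : ℤ) - m), hmn']
  have b4a : 2 * (m * (n - 1)) - m * (m - 1) ≤ n ^ 2 := by linarith only [b4]
  have b4b : 2 ≤ n ^ 2 - (2 * (m * (n - 1)) - m * (m - 1)) := Nat.le_sub_of_add_le (by linarith only [b4])
  have cK' : ((n ^ 2 - m * (n - 1) - 1 : ℕ) : ℝ) = (n : ℝ) ^ 2 - m * ((n : ℝ) - 1) - 1 := by
    rw [Nat.cast_sub b2, Nat.cast_sub b1, Nat.cast_one, cV, cK]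
  have cL' : ((n ^ 2 - (2 * (m * (n - 1)) - m * (m - 1)) - 2 : ℕ) : ℝ)
      = (n : ℝ) ^ 2 - (2 * ((m : ℝ) * ((n : ℝ) - 1)) - (m : ℝ) * ((m : ℝ) - 1)) - 2 := by
    rw [Nat.cast_sub b4b, Nat.cast_sub b4a, Nat.cast_sub b3]
    push_cast [c1, c1m]
    ring
  have cMu' : ((n ^ 2 - (2 * (m * (n - 1)) - (m ^ 2 + n - 3 * m)) : ℕ) : ℝ)
      = (n : ℝ) ^ 2 - (2 * ((m : ℝ) * ((n : ℝ) - 1)) - ((m : ℝ) ^ 2 + (n : ℝ) - 3 * (m : ℝ))) := by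
    rw [Nat.cast_sub b6, Nat.cast_sub b5, cL]
    push_cast [c1]
    ring
  -- apply the master lemma to the complement
  obtain ⟨hmemC, Ck', Cr', Cs', hgC, e1', e2', e3', _⟩ :=
    my_master Gᶜ hc ((m : ℝ) - 1) ((m : ℝ) - n - 1)
      (by rw [cL', cMu']; ring)
      (by rw [cMu', cK']; ring)
      (by rw [cK']; intro heq
          have h0 : (n : ℝ) * ((n : ℝ) - m) = 0 := by linear_combination heq
          nlinarith only [h0, hN2, hMN1])
      (by rw [cK']; intro heq
          have h0 : (n : ℝ) * ((n : ℝ) - m + 1) = 0 := by linear_combination heq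
          nlinarith only [h0, hN2, hMN1])
      (by intro heq; linarith only [heq, hN2])
  intro h2m hcp
  have h2mR : 2 * (m : ℝ) ≠ (n : ℝ) + 1 := by
    intro heq
    apply h2m
    have : ((2 * m : ℕ) : ℝ) = ((n + 1 : ℕ) : ℝ) := by push_cast; linarith only [heq]
    exact_mod_cast this
  have hCkpos : 0 < Ck := by
    rcases Nat.eq_zero_or_pos Ck with h0 | h0
    · rw [h0] at hCk; norm_num at hCk
    · exact h0
  obtain ⟨i0, hi0⟩ := hex hCkpos
  have hchG : charpolyOf G = ∏ i, (Polynomial.X - Polynomial.C (adjEig G i)) := by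
    rw [charpolyOf_eq G, my_charpoly_eq (adjMatrix_isHermitian G), ← adjEig_eq]
  have hchC : charpolyOf Gᶜ = ∏ i, (Polynomial.X - Polynomial.C (adjEig Gᶜ i)) := by
    rw [charpolyOf_eq Gᶜ, my_charpoly_eq (adjMatrix_isHermitian Gᶜ), ← adjEig_eq]
  have hz : Polynomial.eval ((m * (n - 1) : ℕ) : ℝ) (charpolyOf G) = 0 := by
    rw [hchG, Polynomial.eval_prod]
    refine Finset.prod_eq_zero (Finset.mem_univ i0) ?_
    rw [Polynomial.eval_sub, Polynomial.eval_X, Polynomial.eval_C, hi0, sub_self]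
  have hnz : Polynomial.eval ((m * (n - 1) : ℕ) : ℝ) (charpolyOf Gᶜ) ≠ 0 := by
    rw [hchC, Polynomial.eval_prod]
    refine Finset.prod_ne_zero_iff.mpr (fun j _ => ?_)
    rw [Polynomial.eval_sub, Polynomial.eval_X, Polynomial.eval_C, sub_ne_zero]
    intro heq
    rcases hmemC j with hj | hj | hj
    · rw [← heq, cK, cK'] at hj
      have hfac : ((n : ℝ) - 1) * (2 * m - n - 1) = 0 := by linear_combination hj
      rcases mul_eq_zero.mp hfac with h' | h'
      · linarith only [h', hN2]
      · exact h2mR (by linarith only [h'])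
    · rw [← heq, cK] at hj
      nlinarith only [hj, hM2, hN2]
    · rw [← heq, cK] at hj
      nlinarith only [hj, hM2, hN2, hMN1]
  rw [hcp] at hz
  exact hnz hz

/-- A strongly regular graph with `OA(n,m)` parameters,
`m ∉ {n, n+1}`, is equienergetic with its complement; if moreover `2m ≠ n+1`, then it is
non-isospectral with its complement. -/
theorem OA_parameters_equienergetic {V : Type*} [Fintype V] [DecidableEq V]
    (G : SimpleGraph V) [DecidableRel G.Adj] (n m : ℕ)
    (hn : 2 ≤ n) (hm : 2 ≤ m) (hmn : m ≠ n) (hmn1 : m ≠ n + 1) (hle : 3 * m ≤ m ^ 2 + n)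
    (h : G.IsSRGWith (n ^ 2) (m * (n - 1)) (m ^ 2 + n - 3 * m) (m * (m - 1))) :
    energy G = energy Gᶜ ∧ (2 * m ≠ n + 1 → charpolyOf G ≠ charpolyOf Gᶜ) :=
  ⟨OA_aux_energy G n m hn hm hmn hmn1 hle h, OA_aux_charpoly G n m hn hm hmn hmn1 hle h⟩
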